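/- The relation r is an equivalence relation on C, and the quotient map q : C → X is a surjective local homeomorphism. -/

import Mathlib

/-- The additive circle `ℝ/3ℤ`. -/
abbrev CircleThree : Type := AddCircle (3 : ℝ)

/-- The relation `r` on `C = ℝ/3ℤ`: `r x y` iff `x = y`, or there is `t ∈ (0,1)`
with (`x = [t]` and `y = [t+1]`) or (`x = [t+1]` and `y = [t]`). -/
def relAabAb (x y : CircleThree) : Prop :=
  x = y ∨ ∃ t : ℝ, 0 < t ∧ t < 1 ∧
    ((x = (t : CircleThree) ∧ y = ((t + 1 : ℝ) : CircleThree)) ∨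
     (x = ((t + 1 : ℝ) : CircleThree) ∧ y = (t : CircleThree)))

namespace RelAabAbAux

lemma coe_eq_coe {a b : ℝ} : (a : CircleThree) = b ↔ ∃ n : ℤ, b = a + 3 * n := by
  rw [show ((a : CircleThree) = b) ↔ _ from QuotientAddGroup.eq]
  simp_rw [AddSubgroup.mem_zmultiples_iff, zsmul_eq_mul]
  constructor
  · rintro ⟨n, hn⟩; exact ⟨n, by linarith⟩
  · rintro ⟨n, hn⟩; exact ⟨n, by linarith⟩

/-- If two reals are congruent mod 3 and within distance 3, they are equal. -/
lemma coe_inj {a b : ℝ} (h : (a : CircleThree) = b) (hd : |a - b| < 3) : a = b := by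
  obtain ⟨n, hn⟩ := coe_eq_coe.mp h
  rw [abs_lt] at hd
  have h1 : (-1 : ℝ) < n := by nlinarith
  have h2 : (n : ℝ) < 1 := by nlinarith
  have h3 : (-1 : ℤ) < n := by exact_mod_cast h1
  have h4 : (n : ℤ) < 1 := by exact_mod_cast h2
  have : n = 0 := by omega
  subst this; simp at hn; linarith

lemma rel_refl : ∀ x, relAabAb x x := fun x => Or.inl rfl

lemma rel_symm : ∀ {x y}, relAabAb x y → relAabAb y x := by
  rintro x y (rfl | ⟨t, h0, h1, (⟨hx, hy⟩ | ⟨hx, hy⟩)⟩)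
  · exact Or.inl rfl
  · exact Or.inr ⟨t, h0, h1, Or.inr ⟨hy, hx⟩⟩
  · exact Or.inr ⟨t, h0, h1, Or.inl ⟨hy, hx⟩⟩

lemma rel_trans : ∀ {x y z}, relAabAb x y → relAabAb y z → relAabAb x z := by
  rintro x y z (rfl | ⟨t, ht0, ht1, hc⟩) hyz
  · exact hyz
  rcases hyz with rfl | ⟨s, hs0, hs1, hc'⟩
  · exact Or.inr ⟨t, ht0, ht1, hc⟩
  rcases hc with ⟨hx, hy⟩ | ⟨hx, hy⟩ <;> rcases hc' with ⟨hy', hz⟩ | ⟨hy', hz⟩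
  · -- y = [t+1] = [s] : impossible
    exfalso
    have := coe_inj (hy ▸ hy' : ((t + 1 : ℝ) : CircleThree) = s)
      (by rw [abs_lt]; constructor <;> linarith)
    linarith
  · -- y = [t+1] = [s+1] : t = s, z = [s] = [t] = x
    have hts : t + 1 = s + 1 := coe_inj (hy ▸ hy')
      (by rw [abs_lt]; constructor <;> linarith)
    have : t = s := by linarith
    subst this
    exact Or.inl (hx.trans hz.symm)
  · -- y = [t] = [s] : t = s, z = [s+1] = [t+1] = x
    have hts : t = s := coe_inj (hy ▸ hy')
      (by rw [abs_lt]; constructor <;> linarith)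
    subst hts
    exact Or.inl (hx.trans hz.symm)
  · -- y = [t] = [s+1] : impossible
    exfalso
    have := coe_inj (hy ▸ hy' : (t : CircleThree) = ((s + 1 : ℝ) : CircleThree))
      (by rw [abs_lt]; constructor <;> linarith)
    linarith

lemma rel_equiv : Equivalence relAabAb :=
  ⟨rel_refl, rel_symm, rel_trans⟩

lemma mk_eq_mk {a b : CircleThree} :
    Quot.mk relAabAb a = Quot.mk relAabAb b ↔ relAabAb a b := by
  constructor
  · intro h
    exact (rel_equiv.eqvGen_iff).mp (Quot.eqvGen_exact h)
  · exact Quot.sound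

/-- The open arc `(a,b)` in the circle. -/
def arc (a b : ℝ) : Set CircleThree := ((↑) : ℝ → CircleThree) '' Set.Ioo a b

lemma arc_open (a b : ℝ) : IsOpen (arc a b) :=
  QuotientAddGroup.isOpenMap_coe _ isOpen_Ioo

lemma sat_eq (U : Set CircleThree) :
    Quot.mk relAabAb ⁻¹' (Quot.mk relAabAb '' U) =
      U ∪ (fun x => x + ((1 : ℝ) : CircleThree)) '' (U ∩ arc 0 1)
        ∪ (fun x => x - ((1 : ℝ) : CircleThree)) '' (U ∩ arc 1 2) := by
  have key : ∀ t : ℝ, ((t + 1 : ℝ) : CircleThree) = (t : CircleThree) + ((1 : ℝ) : CircleThree) :=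
    fun t => AddCircle.coe_add (p := (3:ℝ)) t 1
  ext x
  simp only [Set.mem_preimage, Set.mem_image, Set.mem_union, Set.mem_inter_iff]
  constructor
  · rintro ⟨u, hu, huv⟩
    rcases mk_eq_mk.mp huv with rfl | ⟨t, ht0, ht1, ⟨hu', hx⟩ | ⟨hu', hx⟩⟩
    · exact Or.inl (Or.inl hu)
    · refine Or.inl (Or.inr ⟨u, ⟨hu, t, ⟨ht0, ht1⟩, hu'.symm⟩, ?_⟩)
      rw [hu', hx, key]
    · refine Or.inr ⟨u, ⟨hu, t + 1, ⟨by linarith, by linarith⟩, hu'.symm⟩, ?_⟩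
      rw [hu', hx, key, add_sub_cancel_right]
  · rintro ((hx | ⟨u, ⟨hu, t, ⟨ht0, ht1⟩, hut⟩, hux⟩) | ⟨u, ⟨hu, s, ⟨hs1, hs2⟩, hus⟩, hux⟩)
    · exact ⟨x, hx, rfl⟩
    · refine ⟨u, hu, mk_eq_mk.mpr (Or.inr ⟨t, ht0, ht1, Or.inl ⟨hut.symm, ?_⟩⟩)⟩
      rw [← hux, ← hut, key]
    · refine ⟨u, hu, mk_eq_mk.mpr (Or.inr ⟨s - 1, by linarith, by linarith,
        Or.inr ⟨by rw [← hus]; norm_num, ?_⟩⟩)⟩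
      rw [← hux, ← hus]
      rw [show s = (s - 1) + 1 by ring, key]
      simp [add_sub_cancel_right]

lemma isOpenMap_mk : IsOpenMap (Quot.mk relAabAb) := by
  intro U hU
  rw [isOpen_coinduced, sat_eq]
  refine ((hU.union ?_).union ?_)
  · exact (Homeomorph.addRight ((1 : ℝ) : CircleThree)).isOpenMap _
      (hU.inter (arc_open 0 1))
  · exact (Homeomorph.subRight ((1 : ℝ) : CircleThree)).isOpenMap _
      (hU.inter (arc_open 1 2))

lemma injOn_arc (s : ℝ) : Set.InjOn (Quot.mk relAabAb) (arc (s - 2⁻¹) (s + 2⁻¹)) := by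
  rintro u ⟨a, ⟨ha1, ha2⟩, rfl⟩ v ⟨b, ⟨hb1, hb2⟩, rfl⟩ huv
  have hab : |b - a| < 1 := by rw [abs_lt]; constructor <;> linarith
  rcases mk_eq_mk.mp huv with h | ⟨t, ht0, ht1, ⟨hu', hx'⟩ | ⟨hu', hx'⟩⟩
  · exact h
  · -- a ≡ t mod 3, b ≡ t+1 mod 3 : so b - a ≡ 1 mod 3, impossible since |b-a|<1
    exfalso
    obtain ⟨m, hm⟩ := coe_eq_coe.mp hu'
    obtain ⟨n, hn⟩ := coe_eq_coe.mp hx'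
    rw [abs_lt] at hab
    -- b - a - 1 = 3 * (m - n) ∈ (-2, 0)
    have h1 : (-2 : ℝ) < 3 * (((m - n : ℤ) : ℝ)) := by push_cast; linarith
    have h2 : (3 : ℝ) * (((m - n : ℤ) : ℝ)) < 0 := by push_cast; linarith
    have h4 : (-2 : ℤ) < 3 * (m - n) := by exact_mod_cast h1
    have h5 : (3 : ℤ) * (m - n) < 0 := by exact_mod_cast h2
    omega
  · exfalso
    obtain ⟨m, hm⟩ := coe_eq_coe.mp hu'
    obtain ⟨n, hn⟩ := coe_eq_coe.mp hx'
    rw [abs_lt] at hab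
    -- b - a + 1 = 3 * (m - n) ∈ (0, 2)
    have h1 : (0 : ℝ) < 3 * (((m - n : ℤ) : ℝ)) := by push_cast; linarith
    have h2 : (3 : ℝ) * (((m - n : ℤ) : ℝ)) < 2 := by push_cast; linarith
    have h4 : (0 : ℤ) < 3 * (m - n) := by exact_mod_cast h1
    have h5 : (3 : ℤ) * (m - n) < 2 := by exact_mod_cast h2
    omega

end RelAabAbAux

theorem stmt_1 :
    Equivalence relAabAb ∧
    Function.Surjective (Quot.mk relAabAb) ∧
    IsLocalHomeomorph (Quot.mk relAabAb) := by
  refine ⟨RelAabAbAux.rel_equiv, Quot.mk_surjective, ?_⟩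
  rw [isLocalHomeomorph_iff_isOpenEmbedding_restrict]
  intro x
  obtain ⟨s, rfl⟩ := QuotientAddGroup.mk_surjective x
  set U : Set CircleThree := RelAabAbAux.arc (s - 2⁻¹) (s + 2⁻¹) with hUdef
  have hUopen : IsOpen U := RelAabAbAux.arc_open _ _
  have hxU : (s : CircleThree) ∈ U := ⟨s, ⟨by norm_num, by norm_num⟩, rfl⟩
  refine ⟨U, hUopen.mem_nhds hxU, ?_⟩
  rw [Topology.isOpenEmbedding_iff_continuous_injective_isOpenMap]
  refine ⟨continuous_quot_mk.comp continuous_subtype_val,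
    Set.injOn_iff_injective.mp (RelAabAbAux.injOn_arc s), ?_⟩
  intro V hV
  have : U.domRestrict (Quot.mk relAabAb) '' V = Quot.mk relAabAb '' (Subtype.val '' V) := by
    rw [Set.image_image]; rfl
  rw [this]
  exact RelAabAbAux.isOpenMap_mk _ (hUopen.isOpenMap_subtype_val V hV)
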